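/- Ky Fan maximum principle: for a Hermitian n×n matrix O and any orthogonal projection P of rank m, the trace Tr(P O P) is at most the sum of the m largest eigenvalues of O. -/

import Mathlib

/-- Partial sum of the first `m` entries of a vector in `ℝ^n`. -/
def pSum {n : ℕ} (x : Fin n → ℝ) (m : ℕ) : ℝ :=
  ∑ i : Fin n, if (i : ℕ) < m then x i else 0

/-- `μ` is the decreasingly sorted eigenvalue vector of a Hermitian matrix. -/
def IsSortedEig {n : ℕ} {A : Matrix (Fin n) (Fin n) ℂ} (hA : A.IsHermitian)
    (μ : Fin n → ℝ) : Prop :=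
  Antitone μ ∧ ∃ σ : Equiv.Perm (Fin n), ∀ i, μ i = hA.eigenvalues (σ i)

open scoped Matrix

/-- Number of indices below `m` in `Fin n`, as a real-valued sum. -/
lemma kf_count {n m : ℕ} (hm : m < n) :
    ∑ i : Fin n, (if (i : ℕ) < m then (1 : ℝ) else 0) = m := by
  rw [← Finset.sum_filter]
  simp only [Finset.sum_const, nsmul_eq_mul, mul_one]
  have : (Finset.univ.filter fun i : Fin n => (i : ℕ) < m) = Finset.Iio ⟨m, hm⟩ := by
    ext i
    simp [Fin.lt_def]
  rw [this, Fin.card_Iio]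

/-- Abstract real inequality behind the Ky Fan principle. -/
lemma kf_sum_le {n m : ℕ} (μ s : Fin n → ℝ) (hμ : Antitone μ)
    (h0 : ∀ i, 0 ≤ s i) (h1 : ∀ i, s i ≤ 1) (hs : ∑ i, s i = m) :
    ∑ i, μ i * s i ≤ pSum μ m := by
  rcases lt_or_ge m n with hm | hm
  · set c := μ ⟨m, hm⟩ with hc
    have key : ∑ i, (μ i - c) * s i ≤ ∑ i : Fin n, (if (i : ℕ) < m then μ i - c else 0) := by
      apply Finset.sum_le_sum
      intro i _
      by_cases h : (i : ℕ) < m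
      · simp only [h, if_pos]
        have hic : c ≤ μ i := hμ (by simp [Fin.le_def]; omega)
        nlinarith [h0 i, h1 i]
      · simp only [h, if_neg, not_false_iff]
        have hic : μ i ≤ c := hμ (by simp [Fin.le_def]; omega)
        nlinarith [h0 i]
    have e1 : ∑ i, μ i * s i = ∑ i, (μ i - c) * s i + c * m := by
      rw [← hs, Finset.mul_sum, ← Finset.sum_add_distrib]
      congr 1; ext i; ring
    have e2 : pSum μ m = ∑ i : Fin n, (if (i : ℕ) < m then μ i - c else 0) + c * m := by
      have := kf_count (n := n) (m := m) hm
      rw [pSum, ← this, Finset.mul_sum, ← Finset.sum_add_distrib]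
      congr 1; ext i
      by_cases h : (i : ℕ) < m <;> simp [h]
    rw [e1, e2]
    linarith
  · -- m ≥ n : then necessarily m = n and all s i = 1
    have hsle : (m : ℝ) ≤ n := by
      rw [← hs]
      calc ∑ i, s i ≤ ∑ _i : Fin n, (1 : ℝ) := Finset.sum_le_sum fun i _ => h1 i
        _ = n := by simp
    have hmn : m = n := le_antisymm (by exact_mod_cast hsle) hm
    subst hmn
    have hall : ∀ i, s i = 1 := by
      have hz : ∑ i : Fin m, (1 - s i) = 0 := by
        rw [Finset.sum_sub_distrib, hs]; simp
      intro i
      have := (Finset.sum_eq_zero_iff_of_nonneg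
        (fun j _ => by linarith [h1 j])).mp hz i (Finset.mem_univ i)
      linarith
    have : ∑ i, μ i * s i = pSum μ m := by
      rw [pSum]
      congr 1; ext i
      simp [hall i, i.isLt]
    linarith [this.le]

/-- The trace of a complex idempotent matrix equals its rank. -/
lemma kf_trace_idem {n : ℕ} (P : Matrix (Fin n) (Fin n) ℂ) (hP2 : P * P = P) :
    P.trace = (P.rank : ℂ) := by
  have hf : P.mulVecLin ∘ₗ P.mulVecLin = P.mulVecLin := by
    rw [← Matrix.mulVecLin_mul, hP2]
  have hp : LinearMap.IsProj (LinearMap.range P.mulVecLin) P.mulVecLin := by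
    constructor
    · intro x; exact LinearMap.mem_range_self _ x
    · rintro x ⟨y, rfl⟩
      rw [← LinearMap.comp_apply, hf]
  have ht := LinearMap.IsProj.trace hp
  have htr : LinearMap.trace ℂ (Fin n → ℂ) P.mulVecLin = P.trace := by
    rw [LinearMap.trace_eq_matrix_trace ℂ (Pi.basisFun ℂ (Fin n))]
    congr 1
    rw [LinearMap.toMatrix_eq_toMatrix']
    ext i j
    simp [LinearMap.toMatrix'_apply, Matrix.mulVecLin_apply, Matrix.mulVec, dotProduct, Pi.single_apply]
  rw [← htr, ht, Matrix.rank]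

theorem ky_fan_maximum_principle {n m : ℕ} (O P : Matrix (Fin n) (Fin n) ℂ)
    (hO : O.IsHermitian) (hP : P.IsHermitian) (hP2 : P * P = P)
    (hrank : P.rank = m)
    (μ : Fin n → ℝ) (hμ : IsSortedEig hO μ) :
    (P * O * P).trace.re ≤ pSum μ m := by
  classical
  obtain ⟨hanti, σ, hσ⟩ := hμ
  set V : Matrix (Fin n) (Fin n) ℂ := (hO.eigenvectorUnitary : Matrix (Fin n) (Fin n) ℂ) with hV
  have hVU : star V * V = 1 := Matrix.mem_unitaryGroup_iff'.mp (hO.eigenvectorUnitary).2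
  have hUV : V * star V = 1 := Matrix.mem_unitaryGroup_iff.mp (hO.eigenvectorUnitary).2
  set Q : Matrix (Fin n) (Fin n) ℂ := star V * P * V with hQ
  -- Q is hermitian and idempotent
  have hQH : Qᴴ = Q := by
    simp only [hQ, Matrix.conjTranspose_mul, Matrix.star_eq_conjTranspose,
      Matrix.conjTranspose_conjTranspose, hP.eq, Matrix.mul_assoc]
  have hQ2 : Q * Q = Q := by
    have h1 : Q * Q = star V * P * (V * star V) * P * V := by
      simp only [hQ, Matrix.mul_assoc]
    rw [h1, hUV, Matrix.mul_one,
      show star V * P * P * V = star V * (P * P) * V by simp only [Matrix.mul_assoc],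
      hP2]
  set t : Fin n → ℝ := fun i => (Q i i).re with htdef
  -- diagonal entries of Q are real and lie in [0,1]
  have hQdiag : ∀ i, Q i i = ((t i : ℝ) : ℂ) := by
    intro i
    have h := congrFun (congrFun hQH i) i
    rw [Matrix.conjTranspose_apply] at h
    exact (Complex.conj_eq_iff_re.mp h).symm
  have hQsum : ∀ i, (t i) = ∑ k, Complex.normSq (Q i k) := by
    intro i
    have h1 : Q i i = ∑ k, Q i k * Q k i := by
      conv_lhs => rw [← hQ2]
      rw [Matrix.mul_apply]
    have h2 : ∀ k, Q k i = star (Q i k) := by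
      intro k
      conv_lhs => rw [← hQH]
      rfl
    have : Q i i = ∑ k, (Complex.normSq (Q i k) : ℂ) := by
      rw [h1]
      congr 1; ext k
      rw [h2 k, Complex.star_def, Complex.mul_conj]
    calc t i = (Q i i).re := rfl
      _ = ((∑ k, (Complex.normSq (Q i k) : ℂ))).re := by rw [← this]
      _ = ∑ k, Complex.normSq (Q i k) := by
          rw [Complex.re_sum]
          simp
  have ht0 : ∀ i, 0 ≤ t i := by
    intro i
    rw [hQsum i]
    exact Finset.sum_nonneg fun k _ => Complex.normSq_nonneg _
  have ht1 : ∀ i, t i ≤ 1 := by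
    intro i
    have hsq : t i ^ 2 ≤ t i := by
      have h1 : Complex.normSq (Q i i) ≤ t i := by
        rw [hQsum i]
        exact Finset.single_le_sum (fun k _ => Complex.normSq_nonneg _) (Finset.mem_univ i)
      have h2 : Complex.normSq (Q i i) = t i ^ 2 := by
        rw [hQdiag i, Complex.normSq_ofReal]; ring
      linarith
    nlinarith [ht0 i]
  -- trace of Q equals m
  have htraceQ : ∑ i, t i = m := by
    have h1 : Q.trace = P.trace := by
      calc Q.trace = ((star V * P) * V).trace := by rw [hQ]
        _ = (V * (star V * P)).trace := by rw [Matrix.trace_mul_comm]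
        _ = ((V * star V) * P).trace := by rw [Matrix.mul_assoc]
        _ = P.trace := by rw [hUV, Matrix.one_mul]
    have h2 : Q.trace = ((m : ℝ) : ℂ) := by
      rw [h1, kf_trace_idem P hP2, hrank]
      simp
    have h3 : Q.trace = ((∑ i, t i : ℝ) : ℂ) := by
      rw [Matrix.trace]
      push_cast
      congr 1; ext i
      exact hQdiag i
    rw [h2] at h3
    exact_mod_cast h3.symm
  -- rewrite the trace
  have hcycle : (P * O * P).trace = (O * P).trace := by
    rw [Matrix.trace_mul_comm (P * O) P, ← Matrix.mul_assoc, hP2, Matrix.trace_mul_comm]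
  set D : Matrix (Fin n) (Fin n) ℂ :=
    Matrix.diagonal (RCLike.ofReal ∘ hO.eigenvalues) with hD
  have hspec : O = V * D * star V := by
    have h := hO.spectral_theorem
    rw [Unitary.conjStarAlgAut_apply] at h
    exact h
  have htraceOP : (O * P).trace = (D * Q).trace := by
    calc (O * P).trace = (V * (D * (star V * P))).trace := by
          rw [hspec]; simp only [Matrix.mul_assoc]
      _ = ((D * (star V * P)) * V).trace := Matrix.trace_mul_comm _ _
      _ = (D * Q).trace := by rw [hQ]; simp only [Matrix.mul_assoc]
  have hDQ : (D * Q).trace = ∑ i, ((hO.eigenvalues i : ℝ) : ℂ) * Q i i := by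
    rw [Matrix.trace]
    congr 1; ext i
    rw [Matrix.diag]
    rw [hD, Matrix.diagonal_mul]
    rfl
  have hre : (P * O * P).trace.re = ∑ i, hO.eigenvalues i * t i := by
    rw [hcycle, htraceOP, hDQ, Complex.re_sum]
    congr 1; ext i
    rw [Complex.re_ofReal_mul]
  rw [hre]
  have hperm : ∑ i, hO.eigenvalues i * t i = ∑ i, μ i * t (σ i) := by
    rw [← Equiv.sum_comp σ (fun i => hO.eigenvalues i * t i)]
    congr 1; ext i
    rw [hσ i]
  rw [hperm]
  apply kf_sum_le μ (fun i => t (σ i)) hanti (fun i => ht0 _) (fun i => ht1 _)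
  rw [Equiv.sum_comp σ t, htraceQ]
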